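/- Let X be a finite type with Fintype.card X = m and let σ : Equiv.Perm X. For k ≥ 1 let j_k(σ) be the number of cycles of length k in the disjoint cycle decomposition of σ (for k ≥ 2 this is the multiplicity of k in σ.cycleType; j_1(σ) = m - σ.support.card is the number of fixed points). Then for every i, the number of i-element subsets s of X with σ '' s = s (i.e. s.image σ = s for s : Finset X with s.card = i) equals ∑ over all functions β : ℕ → ℕ supported on {1,…,m} with ∑_{k=1}^{m} k * β k = i of ∏_{k=1}^{m} Nat.choose (j_k(σ)) (β k). -/

import Mathlib

open Finset Equiv

set_option linter.unusedSectionVars false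
set_option linter.unusedVariables false

namespace Stmt5Aux

/-- Counting subsets with a prescribed "profile" with respect to a grading `g`. -/
lemma count_profile {α : Type*} [DecidableEq α] (K : Finset ℕ) (g : α → ℕ) :
    ∀ A : Finset α, (∀ a ∈ A, g a ∈ K) → ∀ β : ℕ → ℕ,
    (A.powerset.filter fun T => ∀ k ∈ K, (T.filter fun a => g a = k).card = β k).card
      = ∏ k ∈ K, Nat.choose ((A.filter fun a => g a = k).card) (β k) := by
  induction K using Finset.induction_on with
  | empty =>
    intro A hA β
    have hAe : A = ∅ := eq_empty_of_forall_notMem fun a ha => absurd (hA a ha) (notMem_empty _)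
    subst hAe; simp
  | @insert k₀ K' hk₀ ih =>
    intro A hA β
    set A₀ := A.filter fun a => g a = k₀ with hA₀
    set A' := A.filter fun a => ¬ g a = k₀ with hA'
    have hA'mem : ∀ a ∈ A', g a ∈ K' := by
      intro a ha
      rw [hA', mem_filter] at ha
      rcases mem_insert.1 (hA a ha.1) with h | h
      · exact absurd h ha.2
      · exact h
    have key : (A.powerset.filter fun T => ∀ k ∈ insert k₀ K',
          (T.filter fun a => g a = k).card = β k).card
        = ((A₀.powersetCard (β k₀)) ×ˢ (A'.powerset.filter fun T => ∀ k ∈ K',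
            (T.filter fun a => g a = k).card = β k)).card := by
      refine Finset.card_bij' (fun T _ => (T.filter fun a => g a = k₀, T.filter fun a => ¬ g a = k₀))
        (fun p _ => p.1 ∪ p.2) ?hi ?hj ?left ?right
      case hi =>
        intro T hT
        rw [mem_filter, mem_powerset] at hT
        rw [mem_product, mem_powersetCard, mem_filter, mem_powerset]
        refine ⟨⟨filter_subset_filter _ hT.1, hT.2 k₀ (mem_insert_self _ _)⟩,
          filter_subset_filter _ hT.1, ?_⟩
        intro k hk
        have hkk : ¬ (k = k₀) := fun h => hk₀ (h ▸ hk)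
        rw [filter_filter, ← hT.2 k (mem_insert_of_mem hk)]
        congr 1
        apply filter_congr
        intro a _
        constructor
        · exact fun h => h.2
        · exact fun h => ⟨fun h' => hkk (h' ▸ h.symm ▸ rfl), h⟩
      case hj =>
        intro p hp
        rw [mem_product, mem_powersetCard, mem_filter, mem_powerset] at hp
        obtain ⟨⟨hP, hPc⟩, hQ, hQf⟩ := hp
        have hPk : ∀ a ∈ p.1, g a = k₀ := fun a ha => (mem_filter.1 (hP ha)).2
        have hQk : ∀ a ∈ p.2, ¬ g a = k₀ := fun a ha => (mem_filter.1 (hQ ha)).2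
        rw [mem_filter, mem_powerset]
        constructor
        · exact union_subset (hP.trans (filter_subset _ _)) (hQ.trans (filter_subset _ _))
        · intro k hk
          rcases mem_insert.1 hk with h | h
          · subst h
            rw [filter_union, filter_true_of_mem hPk, filter_false_of_mem (fun a ha => hQk a ha),
              union_empty]
            exact hPc
          · have hkk : ¬ (k = k₀) := fun hh => hk₀ (hh ▸ h)
            rw [filter_union, filter_false_of_mem (fun a ha hc => hkk (hc.symm.trans (hPk a ha))),
              empty_union]
            exact hQf k h
      case left =>
        intro T hT
        exact filter_union_filter_not_eq _ T
      case right =>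
        intro p hp
        rw [mem_product, mem_powersetCard, mem_filter, mem_powerset] at hp
        obtain ⟨⟨hP, _⟩, hQ, _⟩ := hp
        have hPk : ∀ a ∈ p.1, g a = k₀ := fun a ha => (mem_filter.1 (hP ha)).2
        have hQk : ∀ a ∈ p.2, ¬ g a = k₀ := fun a ha => (mem_filter.1 (hQ ha)).2
        have h1 : (p.1 ∪ p.2).filter (fun a => g a = k₀) = p.1 := by
          rw [filter_union, filter_true_of_mem hPk, filter_false_of_mem hQk, union_empty]
        have h2 : (p.1 ∪ p.2).filter (fun a => ¬ g a = k₀) = p.2 := by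
          rw [filter_union, filter_true_of_mem hQk,
            filter_false_of_mem (fun a ha h => h (hPk a ha)), empty_union]
        exact Prod.ext h1 h2
    rw [key, card_product, card_powersetCard, ih A' hA'mem β, prod_insert hk₀, hA₀]
    congr 1
    apply prod_congr rfl
    intro k hk
    have hkk : ¬ (k = k₀) := fun h => hk₀ (h ▸ hk)
    congr 2
    rw [hA', filter_filter]
    apply filter_congr
    intro a _
    constructor
    · exact fun h => h.2
    · exact fun h => ⟨fun h' => hkk (h' ▸ h.symm ▸ rfl), h⟩

variable {X : Type*} [Fintype X] [DecidableEq X] {σ : Equiv.Perm X}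

/-- The orbit of `x` under `σ`, as a finset. -/
def orb (σ : Equiv.Perm X) (x : X) : Finset X := univ.filter (σ.SameCycle x)

lemma mem_orb {x y : X} : y ∈ orb σ x ↔ σ.SameCycle x y := by simp [orb]

lemma self_mem_orb (x : X) : x ∈ orb σ x := mem_orb.2 (Equiv.Perm.SameCycle.refl σ x)

lemma orb_eq_orb {x y : X} (h : σ.SameCycle x y) : orb σ x = orb σ y := by
  ext z; rw [mem_orb, mem_orb]
  exact ⟨fun hz => h.symm.trans hz, fun hz => h.trans hz⟩

/-- The set of orbits of `σ`. -/
def Orbs (σ : Equiv.Perm X) : Finset (Finset X) := univ.image (orb σ)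

lemma orb_mem_Orbs (x : X) : orb σ x ∈ Orbs σ := mem_image_of_mem _ (mem_univ x)

lemma eq_of_mem_orbs {o₁ o₂ : Finset X} (h₁ : o₁ ∈ Orbs σ) (h₂ : o₂ ∈ Orbs σ)
    {x : X} (hx₁ : x ∈ o₁) (hx₂ : x ∈ o₂) : o₁ = o₂ := by
  obtain ⟨y₁, -, rfl⟩ := mem_image.1 h₁
  obtain ⟨y₂, -, rfl⟩ := mem_image.1 h₂
  rw [orb_eq_orb (mem_orb.1 hx₁), orb_eq_orb (mem_orb.1 hx₂)]

lemma orbs_disjoint {o₁ o₂ : Finset X} (h₁ : o₁ ∈ Orbs σ) (h₂ : o₂ ∈ Orbs σ)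
    (hne : o₁ ≠ o₂) : Disjoint o₁ o₂ := by
  rw [Finset.disjoint_left]
  intro x hx₁ hx₂
  exact hne (eq_of_mem_orbs h₁ h₂ hx₁ hx₂)

lemma orbs_card_mem_Icc {o : Finset X} (ho : o ∈ Orbs σ) :
    o.card ∈ Finset.Icc 1 (Fintype.card X) := by
  obtain ⟨x, -, rfl⟩ := mem_image.1 ho
  rw [mem_Icc]
  exact ⟨card_pos.2 ⟨x, self_mem_orb x⟩, card_le_card (subset_univ _)⟩

lemma image_eq_self_of_maps {s : Finset X} (h : ∀ x ∈ s, σ x ∈ s) : s.image σ = s :=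
  eq_of_subset_of_card_le (image_subset_iff.2 h)
    (le_of_eq (card_image_of_injective _ σ.injective).symm)

lemma apply_mem_of_image_eq {s : Finset X} (hs : s.image σ = s) {x : X} (hx : x ∈ s) :
    σ x ∈ s := hs ▸ mem_image_of_mem σ hx

lemma image_orb (x : X) : (orb σ x).image σ = orb σ x :=
  image_eq_self_of_maps fun y hy =>
    mem_orb.2 ((Equiv.Perm.sameCycle_apply_right).2 (mem_orb.1 hy))

lemma orb_subset_of_invariant {s : Finset X} (hs : s.image σ = s) {x : X} (hx : x ∈ s) :
    orb σ x ⊆ s := by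
  intro y hy
  obtain ⟨n, -, -, hn⟩ := (mem_orb.1 hy).exists_pow_eq σ
  subst hn
  clear * - hs hx
  induction n with
  | zero => simpa
  | succ n ih => rw [pow_succ', Equiv.Perm.mul_apply]; exact apply_mem_of_image_eq hs ih

lemma biUnion_orbs_eq {s : Finset X} (hs : s.image σ = s) :
    ((Orbs σ).filter fun o => o ⊆ s).biUnion (fun o => o) = s := by
  apply Finset.Subset.antisymm
  · intro x hx
    obtain ⟨o, ho, hxo⟩ := mem_biUnion.1 hx
    exact (mem_filter.1 ho).2 hxo
  · intro x hx
    exact mem_biUnion.2 ⟨orb σ x, mem_filter.2 ⟨orb_mem_Orbs x, orb_subset_of_invariant hs hx⟩,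
      self_mem_orb x⟩

lemma card_invariant_eq {s : Finset X} (hs : s.image σ = s) :
    s.card = ∑ k ∈ Finset.Icc 1 (Fintype.card X),
      k * (((Orbs σ).filter fun o => o ⊆ s).filter fun o => o.card = k).card := by
  conv_lhs => rw [← biUnion_orbs_eq hs]
  rw [card_biUnion (fun o₁ h₁ o₂ h₂ hne =>
    orbs_disjoint (mem_filter.1 h₁).1 (mem_filter.1 h₂).1 hne)]
  rw [← Finset.sum_fiberwise_of_maps_to
    (fun o ho => orbs_card_mem_Icc (mem_filter.1 ho).1) (fun o => o.card)]
  apply Finset.sum_congr rfl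
  intro k hk
  rw [Finset.sum_congr rfl (fun o ho => (mem_filter.1 ho).2), Finset.sum_const, smul_eq_mul,
    mul_comm]

lemma biUnion_invariant {T : Finset (Finset X)} (hT : T ⊆ Orbs σ) :
    (T.biUnion (fun o => o)).image σ = T.biUnion (fun o => o) := by
  rw [Finset.biUnion_image]
  apply Finset.biUnion_congr rfl
  intro o ho
  obtain ⟨x, -, rfl⟩ := mem_image.1 (hT ho)
  exact image_orb x

lemma filter_sub_biUnion {T : Finset (Finset X)} (hT : T ⊆ Orbs σ) :
    (Orbs σ).filter (fun o => o ⊆ T.biUnion (fun o => o)) = T := by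
  ext o
  rw [mem_filter]
  constructor
  · rintro ⟨ho, hsub⟩
    obtain ⟨x, -, rfl⟩ := mem_image.1 ho
    obtain ⟨o', ho', hxo'⟩ := mem_biUnion.1 (hsub (self_mem_orb x))
    rwa [eq_of_mem_orbs ho (hT ho') (self_mem_orb x) hxo']
  · intro ho
    exact ⟨hT ho, subset_biUnion_of_mem (fun o => o) ho⟩

lemma orb_eq_singleton {x : X} (hx : x ∉ σ.support) : orb σ x = {x} := by
  have hfix : σ x = x := by simpa [Equiv.Perm.mem_support] using hx
  ext y
  rw [mem_orb, Finset.mem_singleton]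
  constructor
  · intro h
    obtain ⟨n, -, -, hn⟩ := h.exists_pow_eq σ
    rw [← hn, Equiv.Perm.pow_apply_eq_self_of_apply_eq_self hfix]
  · rintro rfl; exact Equiv.Perm.SameCycle.refl σ _

lemma orb_eq_cycleOf_support {x : X} (hx : x ∈ σ.support) :
    orb σ x = (σ.cycleOf x).support := by
  ext y
  rw [mem_orb, Equiv.Perm.mem_support_cycleOf_iff]
  exact ⟨fun h => ⟨h, hx⟩, And.left⟩

lemma count_orbs_one : ((Orbs σ).filter fun o => o.card = 1).card
    = Fintype.card X - σ.support.card := by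
  have himg : (Orbs σ).filter (fun o => o.card = 1)
      = (univ \ σ.support).image (fun x => ({x} : Finset X)) := by
    ext o
    rw [mem_filter, mem_image]
    constructor
    · rintro ⟨ho, hc⟩
      obtain ⟨x, -, rfl⟩ := mem_image.1 ho
      have hox : orb σ x = {x} := by
        obtain ⟨y, hy⟩ := Finset.card_eq_one.1 hc
        have := self_mem_orb (σ := σ) x
        rw [hy, Finset.mem_singleton] at this
        rw [hy, this]
      refine ⟨x, ?_, hox.symm⟩
      rw [mem_sdiff]
      refine ⟨mem_univ x, fun hxs => ?_⟩
      have : σ x ∈ orb σ x := mem_orb.2 ((Equiv.Perm.sameCycle_apply_right).2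
        (Equiv.Perm.SameCycle.refl σ x))
      rw [hox, Finset.mem_singleton] at this
      exact (Equiv.Perm.mem_support.1 hxs) this
    · rintro ⟨x, hx, rfl⟩
      rw [mem_sdiff] at hx
      have := orb_eq_singleton (σ := σ) hx.2
      exact ⟨this ▸ orb_mem_Orbs x, Finset.card_singleton x⟩
  rw [himg, Finset.card_image_of_injective _ (fun a b h => Finset.singleton_injective h),
    Finset.card_sdiff_of_subset (subset_univ _), Finset.card_univ]

lemma count_orbs_of_two_le {k : ℕ} (hk : 2 ≤ k) :
    ((Orbs σ).filter fun o => o.card = k).card = Multiset.count k σ.cycleType := by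
  have himg : (Orbs σ).filter (fun o => o.card = k)
      = (σ.cycleFactorsFinset.filter fun c => c.support.card = k).image Equiv.Perm.support := by
    ext o
    rw [mem_filter, mem_image]
    constructor
    · rintro ⟨ho, hc⟩
      obtain ⟨x, -, rfl⟩ := mem_image.1 ho
      have hxs : x ∈ σ.support := by
        by_contra hxs
        rw [orb_eq_singleton hxs, Finset.card_singleton] at hc
        omega
      refine ⟨σ.cycleOf x, mem_filter.2 ⟨Equiv.Perm.cycleOf_mem_cycleFactorsFinset_iff.2 hxs, ?_⟩,
        (orb_eq_cycleOf_support hxs).symm⟩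
      rw [← orb_eq_cycleOf_support hxs]; exact hc
    · rintro ⟨c, hc, rfl⟩
      rw [mem_filter] at hc
      have hne : c.support.Nonempty := Finset.card_pos.1 (by omega)
      obtain ⟨a, ha⟩ := hne
      have hca : c = σ.cycleOf a := Equiv.Perm.cycle_is_cycleOf ha hc.1
      have has : a ∈ σ.support := Equiv.Perm.cycleOf_mem_cycleFactorsFinset_iff.1 (hca ▸ hc.1)
      have : c.support = orb σ a := by rw [orb_eq_cycleOf_support has, ← hca]
      exact ⟨this ▸ orb_mem_Orbs a, hc.2⟩
  rw [himg, Finset.card_image_of_injOn]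
  · rw [Equiv.Perm.cycleType_def, Multiset.count_map]
    have : Multiset.filter (fun c => k = (Finset.card ∘ Equiv.Perm.support) c)
        σ.cycleFactorsFinset.val
        = Multiset.filter (fun c => c.support.card = k) σ.cycleFactorsFinset.val :=
      Multiset.filter_congr (fun c _ => ⟨Eq.symm, Eq.symm⟩)
    rw [this]
    rfl
  · intro c₁ h₁ c₂ h₂ hsup
    simp only [coe_filter, Set.mem_setOf_eq] at h₁ h₂
    have hne : c₁.support.Nonempty := Finset.card_pos.1 (by omega)
    obtain ⟨a, ha⟩ := hne
    rw [Equiv.Perm.cycle_is_cycleOf ha h₁.1,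
      Equiv.Perm.cycle_is_cycleOf (hsup ▸ ha) h₂.1]

end Stmt5Aux



open Finset Equiv Stmt5Aux in

/-- first Lemma in the proof of Theorem 3.  For a permutation `σ` of an
`m`-element set `X`, with `j k` the number of `k`-cycles of `σ` (fixed points counting as
`1`-cycles), the number of `i`-element subsets `s` of `X` with `s.image σ = s` equals
`∑_{β₁+2β₂+⋯+mβ_m = i} C(j₁,β₁) C(j₂,β₂) ⋯ C(j_m,β_m)`, the sum being over all functions
`β : ℕ → ℕ` supported on `{1,…,m}`. -/
theorem stmt_5 (X : Type*) [Fintype X] [DecidableEq X] (m : ℕ) (hm : Fintype.card X = m)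
    (σ : Equiv.Perm X) (j : ℕ → ℕ)
    (hj1 : j 1 = m - σ.support.card)
    (hjk : ∀ k, 2 ≤ k → j k = Multiset.count k σ.cycleType) (i : ℕ) :
    (Finset.univ.filter fun s : Finset X => s.card = i ∧ s.image σ = s).card =
      ∑ᶠ β ∈ {β : ℕ → ℕ | (∀ k, β k ≠ 0 → 1 ≤ k ∧ k ≤ m) ∧
          ∑ k ∈ Finset.Icc 1 m, k * β k = i},
        ∏ k ∈ Finset.Icc 1 m, Nat.choose (j k) (β k) := by
  classical
  subst hm
  set m := Fintype.card X with hmdef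
  set S : Set (ℕ → ℕ) := {β : ℕ → ℕ | (∀ k, β k ≠ 0 → 1 ≤ k ∧ k ≤ m) ∧
      ∑ k ∈ Finset.Icc 1 m, k * β k = i} with hSdef
  -- the profile of a subset
  set prof : Finset X → ℕ → ℕ :=
    fun s k => (((Orbs σ).filter fun o => o ⊆ s).filter fun o => o.card = k).card with hprofdef
  -- finiteness of the index set
  have hS : S.Finite := by
    apply Set.Finite.subset (Finset.finite_toSet
      (((Finset.Icc 1 m).pi fun _ => Finset.range (i+1)).image
        fun f k => if h : k ∈ Finset.Icc 1 m then f k h else 0))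
    intro β hβ
    obtain ⟨hβ1, hβ2⟩ := hβ
    rw [Finset.coe_image, Set.mem_image]
    refine ⟨fun k _ => β k, ?_, ?_⟩
    · rw [Finset.mem_coe, Finset.mem_pi]
      intro k hk
      rw [Finset.mem_range, Nat.lt_succ_iff]
      have h1 := Finset.single_le_sum (f := fun k => k * β k) (fun _ _ => Nat.zero_le _) hk
      rw [hβ2] at h1
      have h2 : 1 ≤ k := (Finset.mem_Icc.1 hk).1
      calc β k ≤ k * β k := Nat.le_mul_of_pos_left _ h2
        _ ≤ i := h1
    · funext k
      by_cases hk : k ∈ Finset.Icc 1 m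
      · simp [hk]
      · simp only [dif_neg hk]
        by_contra h
        exact hk (Finset.mem_Icc.2 (hβ1 k fun e => h e.symm))
  rw [← hS.coe_toFinset, finsum_mem_coe_finset]
  -- each invariant subset of size i has profile in S
  have hprofS : ∀ s : Finset X, s.image σ = s → s.card = i → prof s ∈ S := by
    intro s hinv hcard
    constructor
    · intro k hk
      obtain ⟨o, ho⟩ := Finset.card_pos.1 (Nat.pos_of_ne_zero hk)
      rw [mem_filter] at ho
      have := orbs_card_mem_Icc (σ := σ) (mem_filter.1 ho.1).1
      rw [Finset.mem_Icc] at this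
      rw [← ho.2]
      exact this
    · rw [hprofdef]
      exact ((card_invariant_eq hinv).symm).trans hcard
  rw [Finset.card_eq_sum_card_fiberwise (f := prof) (t := hS.toFinset)
    (fun s hs => hS.mem_toFinset.2 (hprofS s (mem_filter.1 hs).2.2 (mem_filter.1 hs).2.1))]
  apply Finset.sum_congr rfl
  intro β hβmem
  rw [Set.Finite.mem_toFinset] at hβmem
  obtain ⟨hβ1, hβ2⟩ := hβmem
  have hmem_Icc : ∀ o ∈ Orbs σ, o.card ∈ Finset.Icc 1 m := fun o ho => orbs_card_mem_Icc ho
  -- replace j by orbit counts in the product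
  have hjn : ∀ k ∈ Finset.Icc 1 m, (j k) = ((Orbs σ).filter fun o => o.card = k).card := by
    intro k hk
    rw [Finset.mem_Icc] at hk
    by_cases h1 : k = 1
    · subst h1; rw [hj1, count_orbs_one]
    · have h2 : 2 ≤ k := by omega
      rw [hjk k h2, count_orbs_of_two_le h2]
  rw [Finset.prod_congr rfl (fun k hk => by rw [hjn k hk]), filter_filter,
    ← count_profile (Finset.Icc 1 m) Finset.card (Orbs σ) hmem_Icc β]
  -- the bijection between invariant subsets with profile β and orbit-set selections
  refine Finset.card_bij' (fun s _ => (Orbs σ).filter (fun o => o ⊆ s))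
    (fun T _ => T.biUnion (fun o => o)) ?bi ?bj ?bleft ?bright
  case bi =>
    intro s hs
    rw [mem_filter, mem_powerset]
    obtain ⟨-, ⟨hci, hinv⟩, hprof⟩ := mem_filter.1 hs
    exact ⟨filter_subset _ _, fun k _ => congrFun hprof k⟩
  case bj =>
    intro T hT
    rw [mem_filter, mem_powerset] at hT
    obtain ⟨hTO, hTk⟩ := hT
    have hinv := biUnion_invariant hTO
    have hfT := filter_sub_biUnion hTO
    have hprofβ : prof (T.biUnion (fun o => o)) = β := by
      funext k
      by_cases hk : k ∈ Finset.Icc 1 m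
      · show ((Orbs σ).filter (fun o => o ⊆ T.biUnion (fun o => o)) |>.filter
            fun o => o.card = k).card = β k
        rw [hfT]
        exact hTk k hk
      · have h1 : ((Orbs σ).filter (fun o => o ⊆ T.biUnion (fun o => o))).filter
            (fun o => o.card = k) = ∅ := by
          rw [Finset.filter_eq_empty_iff]
          intro o ho hc
          exact hk (hc ▸ hmem_Icc o (mem_filter.1 ho).1)
        have h2 : β k = 0 := by
          by_contra h
          exact hk (Finset.mem_Icc.2 (hβ1 k h))
        show (((Orbs σ).filter (fun o => o ⊆ T.biUnion (fun o => o))).filter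
            (fun o => o.card = k)).card = β k
        rw [h1, h2, Finset.card_empty]
    have hcard : (T.biUnion (fun o => o)).card = i := by
      rw [card_invariant_eq hinv]
      calc ∑ k ∈ Finset.Icc 1 m,
            k * (((Orbs σ).filter fun o => o ⊆ T.biUnion (fun o => o)).filter
              fun o => o.card = k).card
          = ∑ k ∈ Finset.Icc 1 m, k * β k :=
            Finset.sum_congr rfl (fun k hk => congrArg (fun n => k * n) (congrFun hprofβ k))
        _ = i := hβ2
    exact mem_filter.2 ⟨mem_univ _, ⟨hcard, hinv⟩, hprofβ⟩
  case bleft =>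
    intro s hs
    exact biUnion_orbs_eq (mem_filter.1 hs).2.1.2
  case bright =>
    intro T hT
    exact filter_sub_biUnion (mem_powerset.1 (mem_filter.1 hT).1)
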